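/- Let T ∈ B(H) be m-concave (β_m(T) ≤ 0). Then β_{m-1}(T) ≥ 0, and for every n ≥ m, T*ⁿTⁿ ≤ Σ_{j=0}^{m-1} binom(n,j) β_j(T). -/

import Mathlib

open ContinuousLinearMap

/-- The `r`-th defect operator `β_r(T) = Σ_{j=0}^{r} (r choose j)(-1)^{r-j} T*^j T^j`. -/
noncomputable def defectOp {H : Type*} [NormedAddCommGroup H] [InnerProductSpace ℂ H]
    [CompleteSpace H] (r : ℕ) (T : H →L[ℂ] H) : H →L[ℂ] H :=
  ∑ j ∈ Finset.range (r + 1),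
    (((-1 : ℂ) ^ (r - j)) * (r.choose j : ℂ)) • ((adjoint T) ^ j * T ^ j)

namespace MConcaveAux

open Finset Function

/-! ### Scalar lemmas on forward differences -/

lemma helperA {f : ℕ → ℝ} {c : ℝ} (h : ∀ n, fwdDiff 1 f n ≤ c) :
    ∀ n, f n ≤ f 0 + n * c := by
  intro n
  induction n with
  | zero => simp
  | succ n ih =>
    have := h n
    simp only [fwdDiff] at this
    push_cast
    nlinarith

lemma helperB : ∀ (k : ℕ) (f : ℕ → ℝ) (c : ℝ), c < 0 →
    (∀ n, (fwdDiff 1)^[k + 1] f n ≤ c) → ∀ M : ℝ, ∃ N, ∀ n, f (N + n) ≤ M := by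
  intro k
  induction k with
  | zero =>
    intro f c hc h M
    simp only [zero_add, iterate_one] at h
    obtain ⟨N, hN⟩ := exists_nat_ge ((f 0 - M) / (-c))
    refine ⟨N, fun n => ?_⟩
    have h1 := helperA h (N + n)
    have h2 : (f 0 - M) ≤ N * (-c) := by
      rwa [div_le_iff₀ (by linarith)] at hN
    have hn0 : (0:ℝ) ≤ n := Nat.cast_nonneg n
    push_cast at h1
    nlinarith [mul_nonneg hn0 (neg_nonneg.2 hc.le)]
  | succ k ih =>
    intro f c hc h M
    have h' : ∀ n, (fwdDiff 1)^[k + 1] (fwdDiff 1 f) n ≤ c := by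
      intro n; have := h n; rwa [iterate_succ_apply] at this
    obtain ⟨N, hN⟩ := ih (fwdDiff 1 f) c hc h' (-1)
    obtain ⟨N', hN'⟩ := exists_nat_ge (f N - M)
    refine ⟨N + N', fun n => ?_⟩
    have hd : ∀ j, fwdDiff 1 (fun i => f (N + i)) j ≤ -1 := fun j => hN j
    have hA := helperA hd (N' + n)
    have he : N + N' + n = N + (N' + n) := by omega
    rw [he]
    have hn0 : (0:ℝ) ≤ n := Nat.cast_nonneg n
    push_cast at hA
    simp only [Nat.add_zero] at hA
    linarith

lemma helperMono {g : ℕ → ℝ} (h : ∀ n, fwdDiff 1 g n ≤ 0) : ∀ n, g n ≤ g 0 := by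
  intro n
  induction n with
  | zero => exact le_refl _
  | succ n ih =>
    have := h n
    simp only [fwdDiff] at this
    linarith

/-- Scalar part 1: a nonnegative sequence whose `(j+1)`-th forward differences are all `≤ 0`
has nonnegative `j`-th forward difference at `0`. -/
lemma scalar1 (j : ℕ) (f : ℕ → ℝ) (hf : ∀ n, 0 ≤ f n)
    (h : ∀ n, (fwdDiff 1)^[j + 1] f n ≤ 0) : 0 ≤ (fwdDiff 1)^[j] f 0 := by
  by_contra hc
  push_neg at hc
  set c := (fwdDiff 1)^[j] f 0 with hcdef
  have hmono : ∀ n, (fwdDiff 1)^[j] f n ≤ c := by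
    refine helperMono fun n => ?_
    have := h n
    rw [iterate_succ_apply'] at this
    exact this
  cases j with
  | zero => exact absurd (hf 0) (by simpa [hcdef] using not_le.2 hc)
  | succ i =>
    obtain ⟨N, hN⟩ := helperB i f c hc hmono (-1)
    have := hN 0
    linarith [hf (N + 0)]

/-- Scalar part 2: discrete Taylor bound for sequences with `m`-th differences `≤ 0`. -/
lemma scalar2 : ∀ (m : ℕ) (f : ℕ → ℝ), (∀ k, (fwdDiff 1)^[m] f k ≤ 0) →
    ∀ n, m ≤ n → f n ≤ ∑ j ∈ Finset.range m, (n.choose j : ℝ) * (fwdDiff 1)^[j] f 0 := by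
  intro m
  induction m with
  | zero => intro f h n _; simpa using h n
  | succ m ih =>
    intro f h n hn
    have h' : ∀ k, (fwdDiff 1)^[m] (fwdDiff 1 f) k ≤ 0 := by
      intro k; have := h k; rwa [iterate_succ_apply] at this
    have IH := ih (fwdDiff 1 f) h'
    set G : ℕ → ℝ := fun n => ∑ j ∈ Finset.range (m + 1), (n.choose j : ℝ) * (fwdDiff 1)^[j] f 0
      with hG
    have hGstep : ∀ k, G (k + 1) = G k + ∑ j ∈ Finset.range m, (k.choose j : ℝ) *
        (fwdDiff 1)^[j] (fwdDiff 1 f) 0 := by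
      intro k
      simp only [hG, Finset.sum_range_succ' _ m]
      have hit : ∀ j, (fwdDiff 1)^[j] (fwdDiff 1 f) 0 = (fwdDiff 1)^[j+1] f 0 := by
        intro j; rw [iterate_succ_apply]
      simp only [hit, Nat.choose_succ_succ, Nat.choose_zero_right, Nat.succ_eq_add_one]
      push_cast
      simp only [add_mul]
      rw [Finset.sum_add_distrib]
      ring
    have hbase : f m = G m := by
      have := shift_eq_sum_fwdDiff_iter (1 : ℕ) f m 0
      simpa [hG, nsmul_eq_mul, mul_comm] using this
    have key : ∀ n, m ≤ n → f n ≤ G n := by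
      intro n hn
      induction n, hn using Nat.le_induction with
      | base => exact le_of_eq hbase
      | succ n hmn ihn =>
        have hstep : f (n + 1) = f n + fwdDiff 1 f n := by simp [fwdDiff]
        rw [hstep, hGstep n]
        exact add_le_add ihn (IH n hmn)
    exact key n (Nat.le_of_succ_le hn)

/-! ### Operator-level lemmas -/

variable {H : Type*} [NormedAddCommGroup H] [InnerProductSpace ℂ H] [CompleteSpace H]

lemma adjoint_pow' (T : H →L[ℂ] H) (j : ℕ) : (adjoint T) ^ j = adjoint (T ^ j) := by
  simp [← star_eq_adjoint, star_pow]

lemma defect_sa (T : H →L[ℂ] H) (r : ℕ) : IsSelfAdjoint (defectOp r T) := by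
  rw [IsSelfAdjoint, defectOp, star_sum]
  refine Finset.sum_congr rfl fun j _ => ?_
  rw [star_smul]
  congr 1
  · simp [Complex.star_def, map_mul, map_pow]
  · simp [← star_eq_adjoint, star_mul, star_pow]

lemma re_term (T : H →L[ℂ] H) (j : ℕ) (y : H) :
    RCLike.re (inner (𝕜 := ℂ) (((adjoint T ^ j * T ^ j) : H →L[ℂ] H) y) y)
      = ‖(T ^ j) y‖ ^ 2 := by
  rw [ContinuousLinearMap.mul_apply, adjoint_pow', adjoint_inner_left, inner_self_eq_norm_sq]

lemma re_defect (T : H →L[ℂ] H) (r k : ℕ) (x : H) :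
    (defectOp r T).reApplyInnerSelf ((T ^ k) x)
      = (fwdDiff 1)^[r] (fun n => ‖(T ^ n) x‖ ^ 2) k := by
  rw [fwdDiff_iter_eq_sum_shift, reApplyInnerSelf_apply, defectOp,
    ContinuousLinearMap.sum_apply, sum_inner, map_sum]
  refine Finset.sum_congr rfl fun j hj => ?_
  rw [ContinuousLinearMap.smul_apply, inner_smul_left]
  have hc : (starRingEnd ℂ) ((-1 : ℂ) ^ (r - j) * (r.choose j : ℂ))
      = (((-1 : ℝ) ^ (r - j) * (r.choose j : ℝ) : ℝ) : ℂ) := by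
    simp
  rw [hc]
  have hre : ∀ (t : ℝ) (z : ℂ), RCLike.re ((t : ℂ) * z) = t * RCLike.re z := by
    intro t z
    simp [RCLike.re, Complex.mul_re]
  rw [hre, re_term]
  have happ : (T ^ j) ((T ^ k) x) = (T ^ (k + j • 1)) x := by
    rw [smul_eq_mul, mul_one, add_comm, pow_add, ContinuousLinearMap.mul_apply]
  rw [happ, zsmul_eq_mul]
  push_cast
  ring

lemma re_defect0 (T : H →L[ℂ] H) (r : ℕ) (x : H) :
    (defectOp r T).reApplyInnerSelf x
      = (fwdDiff 1)^[r] (fun n => ‖(T ^ n) x‖ ^ 2) 0 := by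
  have := re_defect T r 0 x
  simpa using this

end MConcaveAux

open MConcaveAux Function in
/-- If `T` is `m`-concave (`β_m(T) ≤ 0`), then `β_{m-1}(T) ≥ 0` and for every `n ≥ m`,
`T*ⁿTⁿ ≤ Σ_{j=0}^{m-1} binom(n,j) β_j(T)`. -/
theorem m_concave_bounds {H : Type*} [NormedAddCommGroup H] [InnerProductSpace ℂ H]
    [CompleteSpace H] (T : H →L[ℂ] H) (m : ℕ)
    (hconc : (-(defectOp m T)).IsPositive) :
    (defectOp (m - 1) T).IsPositive ∧
      ∀ n : ℕ, m ≤ n →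
        ((∑ j ∈ Finset.range m, (n.choose j : ℂ) • defectOp j T)
          - (adjoint T) ^ n * T ^ n).IsPositive := by
  -- the defect operators applied along the orbit give the iterated forward differences
  have hneg : ∀ y : H, (defectOp m T).reApplyInnerSelf y ≤ 0 := by
    intro y
    have h0 := hconc.2 y
    rw [reApplyInnerSelf_apply, neg_apply, inner_neg_left, map_neg] at h0
    rw [reApplyInnerSelf_apply]
    linarith
  have hD : ∀ x : H, ∀ k, (fwdDiff 1)^[m] (fun n => ‖(T ^ n) x‖ ^ 2) k ≤ 0 := by
    intro x k
    rw [← re_defect]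
    exact hneg _
  have hf : ∀ x : H, ∀ n, (0:ℝ) ≤ ‖(T ^ n) x‖ ^ 2 := fun x n => sq_nonneg _
  constructor
  · -- β_{m-1} ≥ 0
    cases m with
    | zero =>
      have h1 : defectOp 0 T = 1 := by
        simp [defectOp]
      rw [Nat.zero_sub, h1]
      exact isPositive_one
    | succ j =>
      refine ⟨isSelfAdjoint_iff_isSymmetric.mp (defect_sa T _), fun x => ?_⟩
      have := re_defect0 T (j + 1 - 1) x
      rw [this]
      simp only [Nat.add_sub_cancel]
      exact scalar1 j _ (hf x) (hD x)
  · -- the Taylor-type bound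
    intro n hn
    have hTn : IsSelfAdjoint ((adjoint T) ^ n * T ^ n) := by
      rw [IsSelfAdjoint]
      simp [← star_eq_adjoint, star_mul, star_pow]
    have hsum : IsSelfAdjoint (∑ j ∈ Finset.range m, (n.choose j : ℂ) • defectOp j T) := by
      rw [IsSelfAdjoint, star_sum]
      refine Finset.sum_congr rfl fun j _ => ?_
      rw [star_smul, (defect_sa T j).star_eq]
      congr 1
      simp
    refine ⟨isSelfAdjoint_iff_isSymmetric.mp (hsum.sub hTn), fun x => ?_⟩
    rw [reApplyInnerSelf_apply, sub_apply, inner_sub_left, map_sub,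
      ContinuousLinearMap.sum_apply, sum_inner, map_sum]
    have hterm : ∀ j ∈ Finset.range m,
        RCLike.re (inner (𝕜 := ℂ) (((n.choose j : ℂ) • defectOp j T) x) x)
          = (n.choose j : ℝ) * (fwdDiff 1)^[j] (fun i => ‖(T ^ i) x‖ ^ 2) 0 := by
      intro j _
      rw [ContinuousLinearMap.smul_apply, inner_smul_left]
      have hc : (starRingEnd ℂ) ((n.choose j : ℂ)) = (((n.choose j : ℝ)) : ℂ) := by simp
      rw [hc]
      have hre : ∀ (t : ℝ) (z : ℂ), RCLike.re ((t : ℂ) * z) = t * RCLike.re z := by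
        intro t z
        simp [RCLike.re, Complex.mul_re]
      rw [hre]
      congr 1
      rw [← reApplyInnerSelf_apply]
      exact re_defect0 T j x
    rw [Finset.sum_congr rfl hterm, re_term]
    have := scalar2 m (fun i => ‖(T ^ i) x‖ ^ 2) (hD x) n hn
    linarith
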